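/- For every nonnegative integer n, ∫_{-1}^{1} P_n(x) Q_n(x) dx = 0. -/

import Mathlib

open Filter MeasureTheory Real

/-- The `n`-th Legendre polynomial, via the Rodrigues formula. -/
noncomputable def legendrePoly (n : ℕ) : Polynomial ℝ :=
  Polynomial.C (1 / (2 ^ n * (Nat.factorial n : ℝ))) *
    (Polynomial.derivative)^[n] ((Polynomial.X ^ 2 - 1) ^ n)

/-- Cauchy principal value of `∫_{-1}^1 f ξ dξ` with a singularity at `x`. -/
noncomputable def pvInt (f : ℝ → ℝ) (x : ℝ) : ℝ :=
  limUnder (nhdsWithin (0 : ℝ) (Set.Ioi 0))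
    (fun ε : ℝ => (∫ ξ in (-1 : ℝ)..(x - ε), f ξ) + ∫ ξ in (x + ε)..(1 : ℝ), f ξ)

/-- Legendre function of the second kind of degree `n` on `(-1, 1)`,
via the Neumann integral representation. -/
noncomputable def legendreQ (n : ℕ) (x : ℝ) : ℝ :=
  pvInt (fun ξ => (legendrePoly n).eval ξ / (2 * (x - ξ))) x

open Polynomial in
lemma iter_deriv_comp_neg (k : ℕ) (p : ℝ[X]) :
    derivative^[k] (p.comp (-X)) = (-1 : ℝ[X]) ^ k * (derivative^[k] p).comp (-X) := by
  induction k generalizing p with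
  | zero => simp
  | succ k ih =>
    rw [Function.iterate_succ_apply, Function.iterate_succ_apply]
    have h1 : derivative (p.comp (-X)) = -((derivative p).comp (-X)) := by
      rw [derivative_comp]; simp
    rw [h1, iterate_derivative_neg, ih (derivative p)]
    ring

open Polynomial in
lemma legendrePoly_eval_neg (n : ℕ) (y : ℝ) :
    (legendrePoly n).eval (-y) = (-1 : ℝ) ^ n * (legendrePoly n).eval y := by
  have hq : (((X : ℝ[X]) ^ 2 - 1) ^ n).comp (-X) = ((X : ℝ[X]) ^ 2 - 1) ^ n := by
    rw [pow_comp, sub_comp, pow_comp, X_comp, one_comp, neg_pow, neg_one_sq, one_mul]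
  have key := iter_deriv_comp_neg n (((X : ℝ[X]) ^ 2 - 1) ^ n)
  rw [hq] at key
  have hev := congrArg (Polynomial.eval y) key
  simp only [eval_mul, eval_pow, eval_neg, eval_one, eval_comp, eval_X] at hev
  unfold legendrePoly
  simp only [eval_mul, eval_C]
  rw [show Polynomial.eval (-y) (derivative^[n] (((X : ℝ[X]) ^ 2 - 1) ^ n)) =
      (-1 : ℝ) ^ n * Polynomial.eval y (derivative^[n] (((X : ℝ[X]) ^ 2 - 1) ^ n)) by
    rcases Nat.even_or_odd n with h | h
    · rw [h.neg_one_pow] at hev ⊢; rw [one_mul] at hev ⊢; linarith [hev]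
    · rw [h.neg_one_pow] at hev ⊢; rw [neg_one_mul] at hev ⊢; linarith [hev]]
  ring

open Polynomial intervalIntegral in
lemma pv_exists (n : ℕ) {x : ℝ} (hx1 : -1 < x) (hx2 : x < 1) :
    ∃ L, Tendsto (fun ε : ℝ =>
      (∫ ξ in (-1 : ℝ)..(x - ε), (legendrePoly n).eval ξ / (2 * (x - ξ))) +
       ∫ ξ in (x + ε)..(1 : ℝ), (legendrePoly n).eval ξ / (2 * (x - ξ)))
      (nhdsWithin (0 : ℝ) (Set.Ioi 0)) (nhds L) := by
  set p := legendrePoly n with hp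
  obtain ⟨r, hr⟩ := (X_sub_C_dvd_sub_C_eval : X - C x ∣ p - C (p.eval x))
  have hpr : ∀ ξ : ℝ, ξ ≠ x →
      p.eval ξ / (2 * (x - ξ)) = p.eval x / 2 * (x - ξ)⁻¹ - r.eval ξ / 2 := by
    intro ξ hξ
    have h0 : x - ξ ≠ 0 := sub_ne_zero.mpr (Ne.symm hξ)
    have hev : p.eval ξ - p.eval x = (ξ - x) * r.eval ξ := by
      have := congrArg (Polynomial.eval ξ) hr
      simpa using this
    have hev' : p.eval ξ = p.eval x + (ξ - x) * r.eval ξ := by linarith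
    rw [hev']
    field_simp
    ring
  have hrc : Continuous fun y : ℝ => r.eval y := r.continuous
  have hint : ∀ a b : ℝ, IntervalIntegrable (fun y => r.eval y) volume a b :=
    fun a b => hrc.intervalIntegrable a b
  have hR1 : Continuous fun t : ℝ => ∫ ξ in (-1 : ℝ)..t, r.eval ξ :=
    intervalIntegral.continuous_primitive hint (-1)
  have hR2 : Continuous fun t : ℝ => ∫ ξ in (1 : ℝ)..t, r.eval ξ :=
    intervalIntegral.continuous_primitive hint 1
  set G : ℝ → ℝ := fun ε => p.eval x / 2 * Real.log ((x + 1) / (1 - x)) -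
      ((∫ ξ in (-1 : ℝ)..(x - ε), r.eval ξ) / 2 - (∫ ξ in (1 : ℝ)..(x + ε), r.eval ξ) / 2)
    with hG
  have hGc : Continuous G := by
    apply continuous_const.sub
    exact ((hR1.comp (continuous_const.sub continuous_id)).div_const 2).sub
      ((hR2.comp (continuous_const.add continuous_id)).div_const 2)
  refine ⟨G 0, ?_⟩
  have hGt : Tendsto G (nhdsWithin (0 : ℝ) (Set.Ioi 0)) (nhds (G 0)) :=
    (hGc.tendsto 0).mono_left nhdsWithin_le_nhds
  refine hGt.congr' ?_
  have hδ : (0 : ℝ) < min (1 + x) (1 - x) := by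
    apply lt_min <;> linarith
  filter_upwards [Ioo_mem_nhdsGT_of_mem (Set.mem_Ico.mpr ⟨le_refl 0, hδ⟩)] with ε hε
  obtain ⟨hε0, hεδ⟩ := hε
  have hε1 : ε < 1 + x := lt_of_lt_of_le hεδ (min_le_left _ _)
  have hε2 : ε < 1 - x := lt_of_lt_of_le hεδ (min_le_right _ _)
  -- first integral
  have hle1 : (-1 : ℝ) ≤ x - ε := by linarith
  have hle2 : x + ε ≤ 1 := by linarith
  have key1 : (∫ ξ in (-1 : ℝ)..(x - ε), p.eval ξ / (2 * (x - ξ))) =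
      p.eval x / 2 * Real.log ((x + 1) / ε) - (∫ ξ in (-1 : ℝ)..(x - ε), r.eval ξ) / 2 := by
    have heq : Set.EqOn (fun ξ => p.eval ξ / (2 * (x - ξ)))
        (fun ξ => p.eval x / 2 * (x - ξ)⁻¹ - r.eval ξ / 2) (Set.uIcc (-1 : ℝ) (x - ε)) := by
      intro ξ hξ
      rw [Set.uIcc_of_le hle1] at hξ
      exact hpr ξ (by rcases hξ with ⟨_, h2⟩; intro h; rw [h] at h2; linarith)
    rw [intervalIntegral.integral_congr heq]
    have int1 : IntervalIntegrable (fun ξ : ℝ => p.eval x / 2 * (x - ξ)⁻¹) volume (-1) (x - ε) := by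
      apply ContinuousOn.intervalIntegrable
      apply continuousOn_const.mul
      apply ContinuousOn.inv₀ (continuousOn_const.sub continuousOn_id)
      intro ξ hξ
      rw [Set.uIcc_of_le hle1] at hξ
      rcases hξ with ⟨_, h2⟩
      intro h
      simp only [Pi.sub_apply, id_eq] at h
      have : ξ = x := by linarith [sub_eq_zero.mp h]
      linarith
    have int2 : IntervalIntegrable (fun ξ : ℝ => r.eval ξ / 2) volume (-1) (x - ε) :=
      (hrc.div_const 2).intervalIntegrable _ _
    rw [intervalIntegral.integral_sub int1 int2, intervalIntegral.integral_const_mul,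
      intervalIntegral.integral_div]
    congr 2
    have := intervalIntegral.integral_comp_sub_left (a := (-1 : ℝ)) (b := x - ε)
      (fun u : ℝ => u⁻¹) x
    rw [this]
    have hb1 : x - (x - ε) = ε := by ring
    have hb2 : x - (-1 : ℝ) = x + 1 := by ring
    rw [hb1, hb2]
    apply integral_inv
    rw [Set.uIcc_of_le (by linarith : ε ≤ x + 1)]
    rintro ⟨h1, _⟩
    linarith
  have key2 : (∫ ξ in (x + ε)..(1 : ℝ), p.eval ξ / (2 * (x - ξ))) =
      p.eval x / 2 * Real.log (ε / (1 - x)) - (∫ ξ in (x + ε)..(1 : ℝ), r.eval ξ) / 2 := by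
    have heq : Set.EqOn (fun ξ => p.eval ξ / (2 * (x - ξ)))
        (fun ξ => p.eval x / 2 * (x - ξ)⁻¹ - r.eval ξ / 2) (Set.uIcc (x + ε) (1 : ℝ)) := by
      intro ξ hξ
      rw [Set.uIcc_of_le hle2] at hξ
      exact hpr ξ (by rcases hξ with ⟨h1, _⟩; intro h; rw [h] at h1; linarith)
    rw [intervalIntegral.integral_congr heq]
    have int1 : IntervalIntegrable (fun ξ : ℝ => p.eval x / 2 * (x - ξ)⁻¹) volume (x + ε) 1 := by
      apply ContinuousOn.intervalIntegrable
      apply continuousOn_const.mul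
      apply ContinuousOn.inv₀ (continuousOn_const.sub continuousOn_id)
      intro ξ hξ
      rw [Set.uIcc_of_le hle2] at hξ
      rcases hξ with ⟨h1, _⟩
      intro h
      simp only [Pi.sub_apply, id_eq] at h
      have : ξ = x := by linarith [sub_eq_zero.mp h]
      linarith
    have int2 : IntervalIntegrable (fun ξ : ℝ => r.eval ξ / 2) volume (x + ε) 1 :=
      (hrc.div_const 2).intervalIntegrable _ _
    rw [intervalIntegral.integral_sub int1 int2, intervalIntegral.integral_const_mul,
      intervalIntegral.integral_div]
    congr 2
    have := intervalIntegral.integral_comp_sub_left (a := x + ε) (b := (1 : ℝ))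
      (fun u : ℝ => u⁻¹) x
    rw [this]
    have hb1 : x - (1 : ℝ) = x - 1 := by ring
    have hb2 : x - (x + ε) = -ε := by ring
    rw [hb1, hb2]
    rw [integral_inv]
    · rw [show -ε / (x - 1) = ε / (1 - x) by
        rw [div_eq_div_iff (by linarith) (by linarith)]; ring]
    · rw [Set.uIcc_of_le (by linarith : x - 1 ≤ -ε)]
      rintro ⟨_, h2⟩
      linarith
  rw [key1, key2, hG]
  have hlog : Real.log ((x + 1) / ε) + Real.log (ε / (1 - x)) = Real.log ((x + 1) / (1 - x)) := by
    rw [Real.log_div (by linarith) (by linarith), Real.log_div (by linarith) (by linarith),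
      Real.log_div (by linarith) (by linarith)]
    ring
  have hsym : (∫ ξ in (x + ε)..(1 : ℝ), r.eval ξ) = -∫ ξ in (1 : ℝ)..(x + ε), r.eval ξ :=
    (intervalIntegral.integral_symm _ _)
  rw [hsym]
  have : p.eval x / 2 * Real.log ((x + 1) / ε) + p.eval x / 2 * Real.log (ε / (1 - x)) =
      p.eval x / 2 * Real.log ((x + 1) / (1 - x)) := by
    rw [← mul_add, hlog]
  linarith [this]

open Polynomial in
lemma legendreQ_neg (n : ℕ) {x : ℝ} (hx1 : -1 < x) (hx2 : x < 1) :
    legendreQ n (-x) = (-1 : ℝ) ^ (n + 1) * legendreQ n x := by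
  obtain ⟨L, hL⟩ := pv_exists n hx1 hx2
  set p := legendrePoly n with hp
  have hfun : ∀ ξ : ℝ, p.eval ξ / (2 * (-x - ξ)) =
      (fun u : ℝ => (-1 : ℝ) ^ (n + 1) * (p.eval u / (2 * (x - u)))) (-ξ) := by
    intro ξ
    simp only
    rw [show p.eval (-ξ) = (-1 : ℝ) ^ n * p.eval ξ from legendrePoly_eval_neg n ξ]
    rw [show (2 : ℝ) * (-x - ξ) = -(2 * (x - -ξ)) by ring, div_neg]
    rw [pow_succ]
    rcases Nat.even_or_odd n with h | h
    · rw [h.neg_one_pow]; ring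
    · rw [h.neg_one_pow]; ring
  have key : ∀ ε : ℝ,
      ((∫ ξ in (-1 : ℝ)..(-x - ε), p.eval ξ / (2 * (-x - ξ))) +
        ∫ ξ in (-x + ε)..(1 : ℝ), p.eval ξ / (2 * (-x - ξ))) =
      (-1 : ℝ) ^ (n + 1) *
      ((∫ ξ in (-1 : ℝ)..(x - ε), p.eval ξ / (2 * (x - ξ))) +
        ∫ ξ in (x + ε)..(1 : ℝ), p.eval ξ / (2 * (x - ξ))) := by
    intro ε
    have h1 : (∫ ξ in (-1 : ℝ)..(-x - ε), p.eval ξ / (2 * (-x - ξ))) =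
        ∫ ξ in (x + ε)..(1 : ℝ), (-1 : ℝ) ^ (n + 1) * (p.eval ξ / (2 * (x - ξ))) := by
      rw [show (∫ ξ in (-1 : ℝ)..(-x - ε), p.eval ξ / (2 * (-x - ξ))) =
          ∫ ξ in (-1 : ℝ)..(-x - ε),
            (fun u : ℝ => (-1 : ℝ) ^ (n + 1) * (p.eval u / (2 * (x - u)))) (-ξ) from
        intervalIntegral.integral_congr fun ξ _ => hfun ξ]
      rw [intervalIntegral.integral_comp_neg (a := (-1 : ℝ)) (b := -x - ε)
        (fun u : ℝ => (-1 : ℝ) ^ (n + 1) * (p.eval u / (2 * (x - u))))]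
      rw [show -(-x - ε) = x + ε by ring, show -(-1 : ℝ) = 1 by norm_num]
    have h2 : (∫ ξ in (-x + ε)..(1 : ℝ), p.eval ξ / (2 * (-x - ξ))) =
        ∫ ξ in (-1 : ℝ)..(x - ε), (-1 : ℝ) ^ (n + 1) * (p.eval ξ / (2 * (x - ξ))) := by
      rw [show (∫ ξ in (-x + ε)..(1 : ℝ), p.eval ξ / (2 * (-x - ξ))) =
          ∫ ξ in (-x + ε)..(1 : ℝ),
            (fun u : ℝ => (-1 : ℝ) ^ (n + 1) * (p.eval u / (2 * (x - u)))) (-ξ) from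
        intervalIntegral.integral_congr fun ξ _ => hfun ξ]
      rw [intervalIntegral.integral_comp_neg (a := -x + ε) (b := (1 : ℝ))
        (fun u : ℝ => (-1 : ℝ) ^ (n + 1) * (p.eval u / (2 * (x - u))))]
      rw [show -(-x + ε) = x - ε by ring, show -(1 : ℝ) = -1 by norm_num]
    rw [h1, h2, intervalIntegral.integral_const_mul, intervalIntegral.integral_const_mul]
    ring
  have hQx : legendreQ n x = L := hL.limUnder_eq
  have hL' : Tendsto (fun ε : ℝ =>
      (∫ ξ in (-1 : ℝ)..(-x - ε), p.eval ξ / (2 * (-x - ξ))) +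
        ∫ ξ in (-x + ε)..(1 : ℝ), p.eval ξ / (2 * (-x - ξ)))
      (nhdsWithin (0 : ℝ) (Set.Ioi 0)) (nhds ((-1 : ℝ) ^ (n + 1) * L)) := by
    have := hL.const_mul ((-1 : ℝ) ^ (n + 1))
    exact this.congr fun ε => (key ε).symm
  have hQnx : legendreQ n (-x) = (-1 : ℝ) ^ (n + 1) * L := by
    unfold legendreQ pvInt
    exact hL'.limUnder_eq
  rw [hQnx, hQx]

theorem int_PQ_vanishes (n : ℕ) :
    ∫ x in (-1 : ℝ)..1, (legendrePoly n).eval x * legendreQ n x = 0 := by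
  set g : ℝ → ℝ := fun x => (legendrePoly n).eval x * legendreQ n x with hg
  have hodd : ∀ x : ℝ, -1 < x → x < 1 → g (-x) = -g x := by
    intro x h1 h2
    simp only [hg]
    rw [legendrePoly_eval_neg n x, legendreQ_neg n h1 h2]
    have hsign : ((-1 : ℝ)) ^ n * (-1) ^ (n + 1) = -1 := by
      rw [← pow_add]
      exact Odd.neg_one_pow ⟨n, by ring⟩
    linear_combination (Polynomial.eval x (legendrePoly n) * legendreQ n x) * hsign
  have h1 : (∫ x in (-1 : ℝ)..1, g (-x)) = ∫ x in (-1 : ℝ)..1, g x := by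
    rw [intervalIntegral.integral_comp_neg]
    norm_num
  have h2 : (∫ x in (-1 : ℝ)..1, g (-x)) = ∫ x in (-1 : ℝ)..1, -g x := by
    apply intervalIntegral.integral_congr_ae
    have hae : ∀ᵐ x : ℝ, x ∉ ({1} : Set ℝ) :=
      (Set.countable_singleton (1 : ℝ)).ae_notMem volume
    filter_upwards [hae] with x hx hmem
    rw [Set.uIoc_of_le (by norm_num : (-1 : ℝ) ≤ 1)] at hmem
    obtain ⟨hx1, hx2⟩ := hmem
    have hx2' : x < 1 := lt_of_le_of_ne hx2 (by simpa using hx)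
    exact hodd x hx1 hx2'
  rw [h2, intervalIntegral.integral_neg] at h1
  linarith
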